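/- Assume sup_{ℓ≥1} ℓ|a_ℓ| < ∞. Let κ* > 0 satisfy κ* a_ℓ ≠ 2 for every ℓ ≥ 1. Then there exists ε > 0 such that every x ∈ ℓ²_w solving the stationary Fourier system at some κ with |κ − κ*| < ε and ‖x‖_w < ε satisfies x = 0; that is, κ* is not a bifurcation point from the trivial branch. -/

import Mathlib

open scoped BigOperators
open Filter Topology Real

noncomputable section

/-- `x` solves the stationary Fourier system at intensity `κ` for coefficients `a`:
for every `ℓ ≥ 1` the tail series converges absolutely (equivalently, is `Summable` in `ℝ`) and
`ℓ(2 − κ a_ℓ) x_ℓ = κ ∑_{j=1}^{ℓ−1} j a_j x_j x_{ℓ−j}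
  + κ ∑_{j=ℓ+1}^∞ (j a_j − (j−ℓ) a_{j−ℓ}) x_j x_{j−ℓ}`,
where the infinite sum is indexed by `j = ℓ + k + 1`, `k : ℕ`. -/
def SolvesMV (a : ℕ → ℝ) (κ : ℝ) (x : ℕ → ℝ) : Prop :=
  ∀ ℓ : ℕ, 1 ≤ ℓ →
    Summable (fun k : ℕ =>
      (((ℓ + k + 1 : ℕ) : ℝ) * a (ℓ + k + 1) - ((k + 1 : ℕ) : ℝ) * a (k + 1))
        * x (ℓ + k + 1) * x (k + 1)) ∧
    (ℓ : ℝ) * (2 - κ * a ℓ) * x ℓ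
      = κ * ∑ j ∈ Finset.Ico 1 ℓ, (j : ℝ) * a j * x j * x (ℓ - j)
        + κ * ∑' k : ℕ,
            (((ℓ + k + 1 : ℕ) : ℝ) * a (ℓ + k + 1) - ((k + 1 : ℕ) : ℝ) * a (k + 1))
              * x (ℓ + k + 1) * x (k + 1)

/-- The squared weighted norm `∑_{ℓ≥1} (1+ℓ²) x_ℓ²`. -/
def wnormSq (x : ℕ → ℝ) : ℝ := ∑' ℓ : ℕ, (1 + ((ℓ + 1 : ℕ) : ℝ) ^ 2) * x (ℓ + 1) ^ 2

/-- The weighted norm `‖x‖_w = (∑_{ℓ≥1} (1+ℓ²) x_ℓ²)^{1/2}`. -/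
def wnorm (x : ℕ → ℝ) : ℝ := Real.sqrt (wnormSq x)

/-- Membership in the weighted space `ℓ²_w`. -/
def MemL2w (x : ℕ → ℝ) : Prop :=
  Summable fun ℓ : ℕ => (1 + ((ℓ + 1 : ℕ) : ℝ) ^ 2) * x (ℓ + 1) ^ 2

/-- if `κ* a_ℓ ≠ 2` for every `ℓ ≥ 1`, then `κ*` is not a bifurcation point
from the trivial branch: all small solutions near `κ*` vanish. -/
lemma amgm_aux {t w : ℝ} (ht : 0 < t) (hw : 1 ≤ w) (x : ℝ) :
    |x| ≤ (t * (1 / w) + w * x ^ 2 / t) / 2 := by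
  have hw0 : 0 < w := lt_of_lt_of_le one_pos hw
  have h1 : 0 ≤ t * (1 / w) := by positivity
  have h2 : 0 ≤ w * x ^ 2 / t := by positivity
  have key : |x| = Real.sqrt (t * (1 / w)) * Real.sqrt (w * x ^ 2 / t) := by
    rw [← Real.sqrt_mul h1]
    have h3 : t * (1 / w) * (w * x ^ 2 / t) = x ^ 2 := by field_simp
    rw [h3, Real.sqrt_sq_eq_abs]
  nlinarith [sq_nonneg (Real.sqrt (t * (1 / w)) - Real.sqrt (w * x ^ 2 / t)),
    Real.sq_sqrt h1, Real.sq_sqrt h2]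

set_option maxHeartbeats 2000000 in
theorem no_bifurcation_off_critical_set
    (a : ℕ → ℝ) (hA : ∃ C : ℝ, ∀ ℓ : ℕ, 1 ≤ ℓ → (ℓ : ℝ) * |a ℓ| ≤ C)
    (κstar : ℝ) (hκ : 0 < κstar) (hne : ∀ ℓ : ℕ, 1 ≤ ℓ → κstar * a ℓ ≠ 2) :
    ∃ ε : ℝ, 0 < ε ∧ ∀ κ : ℝ, |κ - κstar| < ε →
      ∀ x : ℕ → ℝ, MemL2w x → wnorm x < ε → SolvesMV a κ x →
        ∀ ℓ : ℕ, 1 ≤ ℓ → x ℓ = 0 := by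
  obtain ⟨C, hC⟩ := hA
  have hC0 : 0 ≤ C := le_trans (abs_nonneg (a 1)) (by simpa using hC 1 le_rfl)
  set Ka : ℝ := κstar + 1 with hKadef
  have hKa1 : 1 ≤ Ka := by simp only [hKadef]; linarith
  have hKa0 : 0 < Ka := lt_of_lt_of_le one_pos hKa1
  set N : ℕ := ⌈Ka * C⌉₊ + 1 with hNdef
  have hN1 : 1 ≤ N := Nat.le_add_left 1 _
  have hFne : (Finset.Icc 1 N).Nonempty := ⟨1, Finset.mem_Icc.mpr ⟨le_rfl, hN1⟩⟩
  set δ0 : ℝ := (Finset.Icc 1 N).inf' hFne (fun ℓ => |2 - κstar * a ℓ|) with hδ0def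
  have hδ0pos : 0 < δ0 := by
    rw [hδ0def, Finset.lt_inf'_iff]
    intro ℓ hℓ
    have hℓ1 : 1 ≤ ℓ := (Finset.mem_Icc.mp hℓ).1
    have : 2 - κstar * a ℓ ≠ 0 := sub_ne_zero.mpr (Ne.symm (hne ℓ hℓ1))
    exact abs_pos.mpr this
  set δ : ℝ := min 1 (δ0 / 2) with hδdef
  have hδpos : 0 < δ := lt_min one_pos (by positivity)
  set ε : ℝ := min (min 1 (δ0 / (2 * (C + 1)))) (δ / (12 * C * Ka + 2)) with hεdef
  have hεpos : 0 < ε := by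
    apply lt_min (lt_min one_pos (by positivity)) (by positivity)
  refine ⟨ε, hεpos, ?_⟩
  intro κ hκε x hmem hxw hsol
  have hmem' : Summable (fun ℓ : ℕ => (1 + ((ℓ + 1 : ℕ) : ℝ) ^ 2) * x (ℓ + 1) ^ 2) := hmem
  have hκabs : |κ| ≤ Ka := by
    have h1 : |κ - κstar| < 1 :=
      lt_of_lt_of_le hκε (le_trans (min_le_left _ _) (min_le_left _ _))
    have h2 := abs_sub_abs_le_abs_sub κ κstar
    rw [abs_of_pos hκ] at h2
    simp only [hKadef]
    linarith
  -- denominator bound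
  have hden : ∀ ℓ : ℕ, 1 ≤ ℓ → δ ≤ |2 - κ * a ℓ| := by
    intro ℓ hℓ
    by_cases hcase : ℓ ≤ N
    · have hmem' : ℓ ∈ Finset.Icc 1 N := Finset.mem_Icc.mpr ⟨hℓ, hcase⟩
      have h1 : δ0 ≤ |2 - κstar * a ℓ| := Finset.inf'_le _ hmem'
      have hℓ1 : (1 : ℝ) ≤ (ℓ : ℝ) := by exact_mod_cast hℓ
      have haℓ : |a ℓ| ≤ C := by
        have := hC ℓ hℓ
        nlinarith [abs_nonneg (a ℓ)]
      have h2 : |2 - κstar * a ℓ| - |2 - κ * a ℓ| ≤ |κ - κstar| * |a ℓ| := by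
        have h3 := abs_sub_abs_le_abs_sub (2 - κstar * a ℓ) (2 - κ * a ℓ)
        have h4 : (2 - κstar * a ℓ) - (2 - κ * a ℓ) = (κ - κstar) * a ℓ := by ring
        rw [h4, abs_mul] at h3
        exact h3
      have hεsmall : |κ - κstar| ≤ δ0 / (2 * (C + 1)) :=
        le_of_lt (lt_of_lt_of_le hκε (le_trans (min_le_left _ _) (min_le_right _ _)))
      have h5 : |κ - κstar| * |a ℓ| ≤ δ0 / 2 := by
        have h3 : |κ - κstar| * |a ℓ| ≤ (δ0 / (2 * (C + 1))) * C :=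
          mul_le_mul hεsmall haℓ (abs_nonneg _) (by positivity)
        have h4 : (δ0 / (2 * (C + 1))) * C ≤ δ0 / 2 := by
          rw [div_mul_eq_mul_div, div_le_div_iff₀ (by positivity) two_pos]
          nlinarith
        linarith
      have : δ0 / 2 ≤ |2 - κ * a ℓ| := by linarith
      exact le_trans (min_le_right _ _) this
    · push_neg at hcase
      have hℓN : Ka * C ≤ (ℓ : ℝ) := by
        have h1 : Ka * C ≤ (⌈Ka * C⌉₊ : ℝ) := Nat.le_ceil _
        have h2 : (N : ℝ) ≤ (ℓ : ℝ) := by exact_mod_cast hcase.le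
        have h3 : ((⌈Ka * C⌉₊ : ℕ) : ℝ) + 1 = (N : ℝ) := by
          rw [hNdef]; push_cast; ring
        linarith
      have haℓ : (ℓ : ℝ) * |a ℓ| ≤ C := hC ℓ hℓ
      have hℓpos : (0 : ℝ) < (ℓ : ℝ) := by
        have : (1 : ℝ) ≤ (ℓ : ℝ) := by exact_mod_cast hℓ
        linarith
      have hka : |κ * a ℓ| ≤ 1 := by
        rw [abs_mul]
        have h1 : |κ| * |a ℓ| * (ℓ : ℝ) ≤ Ka * C := by
          nlinarith [abs_nonneg (a ℓ), abs_nonneg κ]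
        nlinarith [abs_nonneg (a ℓ), abs_nonneg κ]
      have h6 : 1 ≤ |2 - κ * a ℓ| := by
        have h7 := abs_sub_abs_le_abs_sub (2 : ℝ) (κ * a ℓ)
        have h8 : |(2 : ℝ)| = 2 := by norm_num
        rw [h8] at h7
        linarith
      exact le_trans (min_le_left _ _) h6
  have hwsq_nonneg : 0 ≤ wnormSq x := tsum_nonneg (fun k => by positivity)
  by_cases hW0 : wnormSq x = 0
  · -- trivial case: everything vanishes
    intro ℓ hℓ
    have h1 : (1 + ((ℓ : ℝ)) ^ 2) * x ℓ ^ 2 ≤ 0 := by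
      have h2 := Summable.le_tsum hmem' (ℓ - 1) (fun j _ => by positivity)
      rw [show wnormSq x = ∑' (ℓ : ℕ), (1 + ((ℓ + 1 : ℕ) : ℝ) ^ 2) * x (ℓ + 1) ^ 2 from rfl] at hW0
      rw [hW0, Nat.sub_add_cancel hℓ] at h2
      exact h2
    have h3 : x ℓ ^ 2 = 0 := by nlinarith [sq_nonneg (x ℓ), sq_nonneg ((ℓ : ℝ))]
    exact pow_eq_zero_iff two_ne_zero |>.mp h3
  · have hWpos : 0 < wnormSq x := lt_of_le_of_ne hwsq_nonneg (Ne.symm hW0)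
    set W : ℝ := wnorm x with hWdef
    have hW : 0 < W := Real.sqrt_pos.mpr hWpos
    have hW2 : W ^ 2 = wnormSq x := Real.sq_sqrt hwsq_nonneg
    have hWε : W < ε := hxw
    -- pointwise bound
    have hpt : ∀ m : ℕ, 1 ≤ m → |x m| ≤ W := by
      intro m hm
      have h1 : (1 + ((m : ℝ)) ^ 2) * x m ^ 2 ≤ wnormSq x := by
        have h2 := Summable.le_tsum hmem' (m - 1) (fun j _ => by positivity)
        rw [Nat.sub_add_cancel hm] at h2
        exact h2
      have h3 : x m ^ 2 ≤ W ^ 2 := by nlinarith [sq_nonneg (x m), sq_nonneg ((m : ℝ))]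
      calc |x m| = Real.sqrt (x m ^ 2) := (Real.sqrt_sq_eq_abs _).symm
        _ ≤ Real.sqrt (W ^ 2) := Real.sqrt_le_sqrt h3
        _ = W := Real.sqrt_sq hW.le
    -- the ℓ¹ bound
    set u : ℕ → ℝ := fun k => 1 / (1 + ((k + 1 : ℕ) : ℝ) ^ 2) with hu
    have hu_nonneg : ∀ k, 0 ≤ u k := fun k => by positivity
    have hu_le : ∀ k : ℕ, u k ≤ 2 * (1 / ((k : ℝ) + 1) - 1 / ((k : ℝ) + 2)) := by
      intro k
      have hk : (0 : ℝ) ≤ (k : ℝ) := Nat.cast_nonneg k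
      have h1 : 1 / ((k : ℝ) + 1) - 1 / ((k : ℝ) + 2) = 1 / (((k : ℝ) + 1) * ((k : ℝ) + 2)) := by
        rw [div_sub_div _ _ (by positivity) (by positivity)]
        norm_num
      rw [hu, h1]
      push_cast
      rw [div_le_iff₀ (by positivity)]
      have h2 : 2 * (1 / (((k : ℝ) + 1) * (((k : ℝ)) + 2))) = 2 / (((k : ℝ) + 1) * ((k : ℝ) + 2)) := by ring
      rw [h2, div_mul_eq_mul_div, le_div_iff₀ (by positivity)]
      nlinarith
    have hsum_u : ∀ n : ℕ, ∑ k ∈ Finset.range n, u k ≤ 2 := by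
      intro n
      have h1 : ∑ k ∈ Finset.range n, u k
          ≤ ∑ k ∈ Finset.range n, 2 * (1 / ((k : ℝ) + 1) - 1 / ((k : ℝ) + 2)) :=
        Finset.sum_le_sum (fun k _ => hu_le k)
      have h2 : ∑ k ∈ Finset.range n, (1 / ((k : ℝ) + 1) - 1 / ((k : ℝ) + 2))
          = 1 - 1 / ((n : ℝ) + 1) := by
        have h3 := Finset.sum_range_sub' (fun k : ℕ => 1 / ((k : ℝ) + 1)) n
        have h4 : ∑ k ∈ Finset.range n, (1 / ((k : ℝ) + 1) - 1 / ((k : ℝ) + 2))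
            = ∑ k ∈ Finset.range n,
              ((fun k : ℕ => 1 / ((k : ℝ) + 1)) k - (fun k : ℕ => 1 / ((k : ℝ) + 1)) (k + 1)) := by
          apply Finset.sum_congr rfl
          intro k _
          push_cast
          ring
        rw [h4, h3]
        norm_num
      rw [← Finset.mul_sum, h2] at h1
      have h4 : (0 : ℝ) ≤ 1 / ((n : ℝ) + 1) := by positivity
      linarith
    have hu_summable : Summable u := summable_of_sum_range_le hu_nonneg hsum_u
    have hu_tsum : ∑' k, u k ≤ 2 := Summable.tsum_le_of_sum_range_le hu_summable hsum_u
    have hgk : ∀ k : ℕ, |x (k + 1)|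
        ≤ (W * u k + (1 + ((k + 1 : ℕ) : ℝ) ^ 2) * x (k + 1) ^ 2 / W) / 2 := by
      intro k
      have h1 : (1 : ℝ) ≤ 1 + ((k + 1 : ℕ) : ℝ) ^ 2 := le_add_of_nonneg_right (sq_nonneg _)
      exact amgm_aux hW h1 (x (k + 1))
    have hg_summable : Summable
        (fun k => (W * u k + (1 + ((k + 1 : ℕ) : ℝ) ^ 2) * x (k + 1) ^ 2 / W) / 2) :=
      (((hu_summable.mul_left W).add (hmem'.div_const W)).div_const 2)
    have habs : Summable (fun k => |x (k + 1)|) :=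
      Summable.of_nonneg_of_le (fun k => abs_nonneg _) hgk hg_summable
    set S : ℝ := ∑' k, |x (k + 1)| with hSdef
    have hS0 : 0 ≤ S := tsum_nonneg (fun k => abs_nonneg _)
    have hS : S ≤ 2 * W := by
      have h1 : S ≤ ∑' k, (W * u k + (1 + ((k + 1 : ℕ) : ℝ) ^ 2) * x (k + 1) ^ 2 / W) / 2 :=
        Summable.tsum_le_tsum hgk habs hg_summable
      have h2 : ∑' k, (W * u k + (1 + ((k + 1 : ℕ) : ℝ) ^ 2) * x (k + 1) ^ 2 / W) / 2
          = (W * (∑' k, u k) + (∑' k, (1 + ((k + 1 : ℕ) : ℝ) ^ 2) * x (k + 1) ^ 2) / W) / 2 := by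
        rw [tsum_div_const, Summable.tsum_add (hu_summable.mul_left W) (hmem'.div_const W),
          tsum_mul_left, tsum_div_const]
      have h3 : (∑' k, (1 + ((k + 1 : ℕ) : ℝ) ^ 2) * x (k + 1) ^ 2) = W ^ 2 := by
        rw [hW2]; rfl
      rw [h2, h3] at h1
      have h4 : W ^ 2 / W = W := by
        field_simp
      rw [h4] at h1
      have h5 : W * (∑' k, u k) ≤ W * 2 := mul_le_mul_of_nonneg_left hu_tsum hW.le
      linarith
    -- the sup
    have hbdd : BddAbove (Set.range fun k : ℕ => |x (k + 1)|) := by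
      refine ⟨W, ?_⟩
      rintro y ⟨k, rfl⟩
      exact hpt (k + 1) (Nat.succ_le_succ (Nat.zero_le k))
    set M : ℝ := ⨆ k : ℕ, |x (k + 1)| with hMdef
    have hMb : ∀ m : ℕ, 1 ≤ m → |x m| ≤ M := by
      intro m hm
      have h1 := le_ciSup hbdd (m - 1)
      rw [Nat.sub_add_cancel hm] at h1
      exact h1
    have hM0 : 0 ≤ M := le_trans (abs_nonneg (x 1)) (hMb 1 le_rfl)
    -- main per-ℓ estimate
    have hmain : ∀ ℓ : ℕ, 1 ≤ ℓ → |x ℓ| ≤ M / 2 := by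
      intro ℓ hℓ
      obtain ⟨hsum, heq⟩ := hsol ℓ hℓ
      -- convolution bound
      have hconv : |∑ j ∈ Finset.Ico 1 ℓ, (j : ℝ) * a j * x j * x (ℓ - j)| ≤ C * M * S := by
        have h1 : |∑ j ∈ Finset.Ico 1 ℓ, (j : ℝ) * a j * x j * x (ℓ - j)|
            ≤ ∑ j ∈ Finset.Ico 1 ℓ, |(j : ℝ) * a j * x j * x (ℓ - j)| :=
          Finset.abs_sum_le_sum_abs _ _
        have h2 : ∑ j ∈ Finset.Ico 1 ℓ, |(j : ℝ) * a j * x j * x (ℓ - j)|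
            ≤ ∑ j ∈ Finset.Ico 1 ℓ, C * M * |x j| := by
          apply Finset.sum_le_sum
          intro j hj
          obtain ⟨hj1, hjℓ⟩ := Finset.mem_Ico.mp hj
          have hja : |(j : ℝ) * a j| ≤ C := by
            rw [abs_mul, Nat.abs_cast]
            exact hC j hj1
          have hxl : |x (ℓ - j)| ≤ M := hMb (ℓ - j) (by omega)
          have h3 : |(j : ℝ) * a j * x j * x (ℓ - j)|
              = |(j : ℝ) * a j| * |x j| * |x (ℓ - j)| := by
            rw [abs_mul, abs_mul]
          rw [h3]
          have h4 : |(j : ℝ) * a j| * |x j| * |x (ℓ - j)| ≤ C * |x j| * M := by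
            apply mul_le_mul (mul_le_mul_of_nonneg_right hja (abs_nonneg _)) hxl
              (abs_nonneg _) (by positivity)
          linarith [h4, mul_comm (C * |x j|) M]
        have h5 : ∑ j ∈ Finset.Ico 1 ℓ, C * M * |x j|
            = C * M * ∑ j ∈ Finset.Ico 1 ℓ, |x j| := by rw [← Finset.mul_sum]
        have h6 : ∑ j ∈ Finset.Ico 1 ℓ, |x j| ≤ S := by
          rw [Finset.sum_Ico_eq_sum_range]
          have h7 : ∑ k ∈ Finset.range (ℓ - 1), |x (1 + k)|
              = ∑ k ∈ Finset.range (ℓ - 1), |x (k + 1)| := by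
            apply Finset.sum_congr rfl
            intro k _
            rw [add_comm]
          rw [h7]
          exact Summable.sum_le_tsum _ (fun k _ => abs_nonneg _) habs
        have h8 : C * M * ∑ j ∈ Finset.Ico 1 ℓ, |x j| ≤ C * M * S :=
          mul_le_mul_of_nonneg_left h6 (by positivity)
        linarith
      -- tail bound
      have htail : |∑' k : ℕ,
          (((ℓ + k + 1 : ℕ) : ℝ) * a (ℓ + k + 1) - ((k + 1 : ℕ) : ℝ) * a (k + 1))
            * x (ℓ + k + 1) * x (k + 1)| ≤ 2 * C * M * S := by
        have habs' : Summable (fun k : ℕ =>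
            |(((ℓ + k + 1 : ℕ) : ℝ) * a (ℓ + k + 1) - ((k + 1 : ℕ) : ℝ) * a (k + 1))
              * x (ℓ + k + 1) * x (k + 1)|) := summable_abs_iff.mpr hsum
        have h1 : |∑' k : ℕ,
            (((ℓ + k + 1 : ℕ) : ℝ) * a (ℓ + k + 1) - ((k + 1 : ℕ) : ℝ) * a (k + 1))
              * x (ℓ + k + 1) * x (k + 1)|
            ≤ ∑' k : ℕ, |(((ℓ + k + 1 : ℕ) : ℝ) * a (ℓ + k + 1)
                - ((k + 1 : ℕ) : ℝ) * a (k + 1)) * x (ℓ + k + 1) * x (k + 1)| := by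
          have hsn : Summable fun k : ℕ => ‖(((ℓ + k + 1 : ℕ) : ℝ) * a (ℓ + k + 1)
              - ((k + 1 : ℕ) : ℝ) * a (k + 1)) * x (ℓ + k + 1) * x (k + 1)‖ := habs'
          exact norm_tsum_le_tsum_norm hsn
        have h2 : ∀ k : ℕ, |(((ℓ + k + 1 : ℕ) : ℝ) * a (ℓ + k + 1)
            - ((k + 1 : ℕ) : ℝ) * a (k + 1)) * x (ℓ + k + 1) * x (k + 1)|
            ≤ 2 * C * M * |x (k + 1)| := by
          intro k
          have hA1 : |((ℓ + k + 1 : ℕ) : ℝ) * a (ℓ + k + 1)| ≤ C := by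
            rw [abs_mul, Nat.abs_cast]
            exact hC _ (by omega)
          have hA2 : |((k + 1 : ℕ) : ℝ) * a (k + 1)| ≤ C := by
            rw [abs_mul, Nat.abs_cast]
            exact hC _ (by omega)
          have hsub : |((ℓ + k + 1 : ℕ) : ℝ) * a (ℓ + k + 1)
              - ((k + 1 : ℕ) : ℝ) * a (k + 1)| ≤ 2 * C := by
            have := abs_sub (((ℓ + k + 1 : ℕ) : ℝ) * a (ℓ + k + 1))
              (((k + 1 : ℕ) : ℝ) * a (k + 1))
            linarith
          have hx1 : |x (ℓ + k + 1)| ≤ M := hMb _ (by omega)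
          have h3 : |(((ℓ + k + 1 : ℕ) : ℝ) * a (ℓ + k + 1)
              - ((k + 1 : ℕ) : ℝ) * a (k + 1)) * x (ℓ + k + 1) * x (k + 1)|
              = |((ℓ + k + 1 : ℕ) : ℝ) * a (ℓ + k + 1) - ((k + 1 : ℕ) : ℝ) * a (k + 1)|
                * |x (ℓ + k + 1)| * |x (k + 1)| := by rw [abs_mul, abs_mul]
          rw [h3]
          have h4 : |((ℓ + k + 1 : ℕ) : ℝ) * a (ℓ + k + 1) - ((k + 1 : ℕ) : ℝ) * a (k + 1)|
              * |x (ℓ + k + 1)| ≤ 2 * C * M :=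
            mul_le_mul hsub hx1 (abs_nonneg _) (by positivity)
          exact mul_le_mul_of_nonneg_right h4 (abs_nonneg _)
        have h5 : ∑' k : ℕ, |(((ℓ + k + 1 : ℕ) : ℝ) * a (ℓ + k + 1)
            - ((k + 1 : ℕ) : ℝ) * a (k + 1)) * x (ℓ + k + 1) * x (k + 1)|
            ≤ ∑' k : ℕ, 2 * C * M * |x (k + 1)| :=
          Summable.tsum_le_tsum h2 habs' (habs.mul_left _)
        have h6 : ∑' k : ℕ, 2 * C * M * |x (k + 1)| = 2 * C * M * S := tsum_mul_left
        linarith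
      -- combine
      have hd : δ ≤ |2 - κ * a ℓ| := hden ℓ hℓ
      have hℓ1 : (1 : ℝ) ≤ (ℓ : ℝ) := by exact_mod_cast hℓ
      have hLHS : δ * |x ℓ| ≤ |(ℓ : ℝ) * (2 - κ * a ℓ) * x ℓ| := by
        rw [abs_mul, abs_mul, Nat.abs_cast]
        nlinarith [abs_nonneg (x ℓ), abs_nonneg (2 - κ * a ℓ),
          mul_le_mul_of_nonneg_right hd (abs_nonneg (x ℓ)),
          mul_nonneg (abs_nonneg (2 - κ * a ℓ)) (abs_nonneg (x ℓ))]
      have hRHS : |(ℓ : ℝ) * (2 - κ * a ℓ) * x ℓ| ≤ Ka * (C * M * S) + Ka * (2 * C * M * S) := by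
        rw [heq]
        have h1 := abs_add_le
          (κ * ∑ j ∈ Finset.Ico 1 ℓ, (j : ℝ) * a j * x j * x (ℓ - j))
          (κ * ∑' k : ℕ, (((ℓ + k + 1 : ℕ) : ℝ) * a (ℓ + k + 1)
            - ((k + 1 : ℕ) : ℝ) * a (k + 1)) * x (ℓ + k + 1) * x (k + 1))
        rw [abs_mul, abs_mul] at h1
        have h2 : |κ| * |∑ j ∈ Finset.Ico 1 ℓ, (j : ℝ) * a j * x j * x (ℓ - j)|
            ≤ Ka * (C * M * S) :=
          mul_le_mul hκabs hconv (abs_nonneg _) hKa0.le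
        have h3 : |κ| * |∑' k : ℕ, (((ℓ + k + 1 : ℕ) : ℝ) * a (ℓ + k + 1)
            - ((k + 1 : ℕ) : ℝ) * a (k + 1)) * x (ℓ + k + 1) * x (k + 1)|
            ≤ Ka * (2 * C * M * S) :=
          mul_le_mul hκabs htail (abs_nonneg _) hKa0.le
        linarith
      have e1 : δ * |x ℓ| ≤ 3 * Ka * C * (M * S) := by
        have : Ka * (C * M * S) + Ka * (2 * C * M * S) = 3 * Ka * C * (M * S) := by ring
        linarith
      have e2 : M * S ≤ M * (2 * W) := mul_le_mul_of_nonneg_left hS hM0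
      have e3 : 3 * Ka * C * (M * S) ≤ 3 * Ka * C * (M * (2 * W)) :=
        mul_le_mul_of_nonneg_left e2 (by positivity)
      have e4 : 3 * Ka * C * (M * (2 * W)) ≤ 6 * Ka * C * ε * M := by
        have h1 : 3 * Ka * C * (M * (2 * W)) = 6 * Ka * C * W * M := by ring
        rw [h1]
        apply mul_le_mul_of_nonneg_right _ hM0
        have h2 : 0 ≤ 6 * Ka * C := by positivity
        nlinarith
      have e6 : 6 * Ka * C * ε ≤ δ / 2 := by
        have hεle : ε ≤ δ / (12 * C * Ka + 2) := min_le_right _ _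
        have hpos : (0 : ℝ) < 12 * C * Ka + 2 := by positivity
        rw [le_div_iff₀ hpos] at hεle
        nlinarith [hεpos]
      have e7 : δ * |x ℓ| ≤ (δ / 2) * M := by
        have h1 : 6 * Ka * C * ε * M ≤ (δ / 2) * M := mul_le_mul_of_nonneg_right e6 hM0
        exact e1.trans (e3.trans (e4.trans h1))
      have h2 : δ * |x ℓ| ≤ δ * (M / 2) := by linarith [e7]
      exact (mul_le_mul_iff_right₀ hδpos).mp h2
    have hMle : M ≤ M / 2 := by
      apply ciSup_le
      intro k
      exact hmain (k + 1) (Nat.succ_le_succ (Nat.zero_le k))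
    have hMz : M = 0 := by linarith
    intro ℓ hℓ
    have h1 := hMb ℓ hℓ
    rw [hMz] at h1
    exact abs_eq_zero.mp (le_antisymm h1 (abs_nonneg _))
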